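/- Let n ≥ 2, let φ : [0,∞) → ℝ be continuous, let Ω ⊆ 𝔹ⁿ be a measurable set whose closure is a compact subset of 𝔹ⁿ, and let R > 0 be such that η_φ(Ω) = η_φ(B_R(o)). (i) If v : [0,∞) → ℝ is nondecreasing and bounded on bounded sets, then ∫_Ω v(d(x)) dη_φ(x) ≥ ∫_{B_R(o)} v(d(x)) dη_φ(x). (ii) If u : [0,∞) → ℝ is nonincreasing and bounded on bounded sets, then ∫_Ω u(d(x)) dη_φ(x) ≤ ∫_{B_R(o)} u(d(x)) dη_φ(x). Moreover, if v (respectively u) is strictly increasing (respectively strictly decreasing), then equality in (i) (respectively (ii)) holds if and only if the symmetric difference of Ω and B_R(o) has Lebesgue measure zero. -/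

import Mathlib

open MeasureTheory Set Metric

/-- The conformal factor `λ(x) = 2 / (1 - ‖x‖²)` of the Poincaré ball model of `ℍⁿ`. -/
noncomputable def confFactor (n : ℕ) (x : EuclideanSpace ℝ (Fin n)) : ℝ :=
  2 / (1 - ‖x‖ ^ 2)

/-- The hyperbolic distance from the origin in the Poincaré ball model:
`d(x) = log ((1 + ‖x‖) / (1 - ‖x‖))`. -/
noncomputable def hypDist (n : ℕ) (x : EuclideanSpace ℝ (Fin n)) : ℝ :=
  Real.log ((1 + ‖x‖) / (1 - ‖x‖))

/-- The weighted measure `η_φ` on the Poincaré ball, with density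
`x ↦ λ(x)ⁿ e^{-φ(d(x))}` with respect to Lebesgue measure. -/
noncomputable def hypWMeasure (n : ℕ) (φ : ℝ → ℝ) : Measure (EuclideanSpace ℝ (Fin n)) :=
  volume.withDensity fun x =>
    ENNReal.ofReal (confFactor n x ^ n * Real.exp (-φ (hypDist n x)))

/-- The geodesic ball of radius `R` centered at the origin of the Poincaré ball model,
i.e. the Euclidean ball of radius `tanh (R/2)`. -/
noncomputable def geoBall (n : ℕ) (R : ℝ) : Set (EuclideanSpace ℝ (Fin n)) :=
  ball (0 : EuclideanSpace ℝ (Fin n)) (Real.tanh (R / 2))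

lemma tanh_half_eq (R : ℝ) : Real.tanh (R/2) = (Real.exp R - 1) / (Real.exp R + 1) := by
  have h : Real.exp (R/2) * Real.exp (R/2) = Real.exp R := by
    rw [← Real.exp_add]; ring_nf
  have hpos : 0 < Real.exp (R/2) := Real.exp_pos _
  have hden : 0 < Real.exp R + 1 := by positivity
  have hden2 : 0 < Real.exp (R/2) + Real.exp (-(R/2)) := by positivity
  rw [Real.tanh_eq_sinh_div_cosh, Real.sinh_eq, Real.cosh_eq, Real.exp_neg]
  rw [div_eq_div_iff (by positivity) hden.ne']
  field_simp
  nlinarith [h, hpos]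

lemma log_ratio_lt_iff {r R : ℝ} (hr0 : 0 ≤ r) (hr1 : r < 1) :
    Real.log ((1+r)/(1-r)) < R ↔ r < Real.tanh (R/2) := by
  have h1 : (0:ℝ) < 1 - r := by linarith
  have h2 : (0:ℝ) < 1 + r := by linarith
  have hx : 0 < (1+r)/(1-r) := div_pos h2 h1
  have hE : 0 < Real.exp R + 1 := by positivity
  rw [Real.log_lt_iff_lt_exp hx, div_lt_iff₀ h1, tanh_half_eq, lt_div_iff₀ hE]
  constructor <;> intro h <;> nlinarith

lemma hypDist_nonneg' {n : ℕ} {x : EuclideanSpace ℝ (Fin n)} (hx : ‖x‖ < 1) :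
    0 ≤ hypDist n x := by
  have h1 : (0:ℝ) < 1 - ‖x‖ := by linarith
  refine Real.log_nonneg ?_
  rw [le_div_iff₀ h1]
  linarith [norm_nonneg x]

lemma hypDist_le {n : ℕ} {x : EuclideanSpace ℝ (Fin n)} {r : ℝ} (hx : ‖x‖ ≤ r) (hr : r < 1) :
    hypDist n x ≤ Real.log ((1+r)/(1-r)) := by
  have h0 := norm_nonneg x
  have h1 : (0:ℝ) < 1 - ‖x‖ := by linarith
  have h2 : (0:ℝ) < 1 - r := by linarith
  have hp : (0:ℝ) < (1+‖x‖)/(1-‖x‖) := by positivity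
  rw [hypDist, Real.log_le_log_iff hp (div_pos (by linarith) h2)]
  rw [div_le_div_iff₀ h1 h2]
  nlinarith

lemma measurable_hypDist (n : ℕ) : Measurable (hypDist n) := by
  exact Real.measurable_log.comp
    ((measurable_const.add measurable_norm).div (measurable_const.sub measurable_norm))

lemma measurable_dens (n : ℕ) (φ : ℝ → ℝ) (hφ : Continuous φ) :
    Measurable fun x : EuclideanSpace ℝ (Fin n) =>
      ENNReal.ofReal (confFactor n x ^ n * Real.exp (-φ (hypDist n x))) := by
  have h1 : Measurable (confFactor n) :=
    measurable_const.div (measurable_const.sub (measurable_norm.pow_const 2))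
  exact ((h1.pow_const n).mul
    (Real.continuous_exp.measurable.comp ((hφ.measurable.comp (measurable_hypDist n)).neg))).ennreal_ofReal

lemma hypWMeasure_apply (n : ℕ) (φ : ℝ → ℝ) {S : Set (EuclideanSpace ℝ (Fin n))}
    (hS : MeasurableSet S) :
    hypWMeasure n φ S
      = ∫⁻ x in S, ENNReal.ofReal (confFactor n x ^ n * Real.exp (-φ (hypDist n x))) :=
  withDensity_apply _ hS

lemma dens_pos {n : ℕ} (φ : ℝ → ℝ) {x : EuclideanSpace ℝ (Fin n)} (hx : ‖x‖ < 1) :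
    0 < confFactor n x ^ n * Real.exp (-φ (hypDist n x)) := by
  have h1 : 0 < 1 - ‖x‖^2 := by nlinarith [norm_nonneg x]
  exact mul_pos (pow_pos (div_pos two_pos h1) n) (Real.exp_pos _)

lemma hyp_key (n : ℕ) (φ : ℝ → ℝ) (hφ : Continuous φ)
    (Ω : Set (EuclideanSpace ℝ (Fin n)))
    (hΩ_meas : MeasurableSet Ω)
    (hΩ_cpt : IsCompact (closure Ω))
    (hΩ_sub : closure Ω ⊆ ball (0 : EuclideanSpace ℝ (Fin n)) 1)
    (R : ℝ) (hR : 0 < R)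
    (hvol : hypWMeasure n φ Ω = hypWMeasure n φ (geoBall n R))
    (v : ℝ → ℝ) (hv : MonotoneOn v (Ici 0))
    (hb : ∀ M : ℝ, ∃ C : ℝ, ∀ t ∈ Icc (0 : ℝ) M, |v t| ≤ C) :
    ((∫ x in geoBall n R, v (hypDist n x) ∂(hypWMeasure n φ)) ≤
      ∫ x in Ω, v (hypDist n x) ∂(hypWMeasure n φ)) ∧
    (StrictMonoOn v (Ici 0) →
      ((∫ x in Ω, v (hypDist n x) ∂(hypWMeasure n φ)) =
        (∫ x in geoBall n R, v (hypDist n x) ∂(hypWMeasure n φ)) ↔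
        volume (symmDiff Ω (geoBall n R)) = 0)) := by
  set μ := hypWMeasure n φ with hμdef
  set B := geoBall n R with hBdef
  set rs := Real.tanh (R/2) with hrs
  have hexpR : 1 < Real.exp R := by nlinarith [Real.add_one_le_exp R]
  have hrs_pos : 0 < rs := by
    rw [hrs, tanh_half_eq]
    apply div_pos <;> linarith
  have hrs_lt1 : rs < 1 := by
    rw [hrs, tanh_half_eq, div_lt_one (by linarith)]
    linarith
  have hBmeas : MeasurableSet B := measurableSet_ball
  have hB1 : ∀ x ∈ B, ‖x‖ < 1 := fun x hx =>
    lt_trans (mem_ball_zero_iff.1 hx) hrs_lt1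
  have hΩ1 : ∀ x ∈ Ω, ‖x‖ < 1 := fun x hx =>
    mem_ball_zero_iff.1 (hΩ_sub (subset_closure hx))
  -- radius bound for Ω
  obtain ⟨r0, hr0_lt1, hr0_nonneg, hΩr0⟩ :
      ∃ r0, r0 < 1 ∧ 0 ≤ r0 ∧ Ω ⊆ Metric.closedBall 0 r0 := by
    rcases eq_empty_or_nonempty (closure Ω) with h | h
    · refine ⟨0, one_pos, le_refl _, fun x hx => absurd (subset_closure hx) (by simp [h])⟩
    · obtain ⟨x0, hx0, hmax⟩ := hΩ_cpt.exists_isMaxOn h continuous_norm.continuousOn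
      refine ⟨‖x0‖, mem_ball_zero_iff.1 (hΩ_sub hx0), norm_nonneg _, fun x hx => ?_⟩
      rw [mem_closedBall_zero_iff]
      exact hmax (subset_closure hx)
  set rm := max r0 rs with hrm
  have hrm_lt1 : rm < 1 := max_lt hr0_lt1 hrs_lt1
  have hrm_nonneg : 0 ≤ rm := le_trans hr0_nonneg (le_max_left _ _)
  have hΩrm : Ω ⊆ Metric.closedBall 0 rm :=
    hΩr0.trans (closedBall_subset_closedBall (le_max_left _ _))
  have hBrm : B ⊆ Metric.closedBall 0 rm :=
    ball_subset_closedBall.trans (closedBall_subset_closedBall (le_max_right _ _))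
  -- continuity and bound of the density on the closed ball
  set dens := fun x : EuclideanSpace ℝ (Fin n) =>
    confFactor n x ^ n * Real.exp (-φ (hypDist n x)) with hdens
  have hcont : ContinuousOn dens (Metric.closedBall 0 rm) := by
    have hnorm1 : ∀ x ∈ Metric.closedBall (0 : EuclideanSpace ℝ (Fin n)) rm, ‖x‖ < 1 :=
      fun x hx => lt_of_le_of_lt (mem_closedBall_zero_iff.1 hx) hrm_lt1
    refine ContinuousOn.mul ?_ ?_
    · refine ContinuousOn.pow ?_ _
      refine ContinuousOn.div continuousOn_const
        (continuousOn_const.sub (continuous_norm.continuousOn.pow 2)) ?_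
      intro x hx
      have := hnorm1 x hx
      have := norm_nonneg x
      nlinarith
    · refine Real.continuous_exp.comp_continuousOn (ContinuousOn.neg ?_)
      refine hφ.comp_continuousOn ?_
      refine ContinuousOn.log ?_ ?_
      · exact (continuousOn_const.add continuous_norm.continuousOn).div
          (continuousOn_const.sub continuous_norm.continuousOn)
          (fun x hx => by have := hnorm1 x hx; intro h; nlinarith)
      · intro x hx
        have h1 := hnorm1 x hx
        have h0 := norm_nonneg x
        have : 0 < (1 + ‖x‖) / (1 - ‖x‖) := div_pos (by linarith) (by linarith)
        exact this.ne'
  obtain ⟨x1, hx1, hC0⟩ := (isCompact_closedBall (0 : EuclideanSpace ℝ (Fin n)) rm).exists_isMaxOn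
    ⟨0, mem_closedBall_self hrm_nonneg⟩ hcont
  have hfinK : μ (Metric.closedBall 0 rm) < ⊤ := by
    rw [hμdef, hypWMeasure_apply n φ measurableSet_closedBall]
    calc ∫⁻ x in Metric.closedBall 0 rm, ENNReal.ofReal (dens x)
        ≤ ∫⁻ _ in Metric.closedBall 0 rm, ENNReal.ofReal (dens x1) :=
          setLIntegral_mono' measurableSet_closedBall
            (fun x hx => ENNReal.ofReal_le_ofReal (hC0 hx))
      _ = ENNReal.ofReal (dens x1) * volume (Metric.closedBall 0 rm) :=
          setLIntegral_const _ _
      _ < ⊤ := ENNReal.mul_lt_top ENNReal.ofReal_lt_top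
          (isCompact_closedBall _ _).measure_lt_top
  -- null sets
  have hnull : ∀ S : Set (EuclideanSpace ℝ (Fin n)), MeasurableSet S →
      (∀ x ∈ S, ‖x‖ < 1) → μ S = 0 → volume S = 0 := by
    intro S hS hS1 h
    rw [hμdef, hypWMeasure_apply n φ hS,
      lintegral_eq_zero_iff (measurable_dens n φ hφ)] at h
    have h2 : volume.restrict S {a | ENNReal.ofReal (dens a) ≠ 0} = 0 := by
      have h3 := ae_iff.1 h
      simpa using h3
    have hsub : S ⊆ {a | ENNReal.ofReal (dens a) ≠ 0} := by
      intro x hx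
      simp only [mem_setOf_eq, ne_eq, ENNReal.ofReal_eq_zero, not_le]
      exact dens_pos φ (hS1 x hx)
    have hle : volume S ≤ 0 := calc
      volume S = volume.restrict S S := (Measure.restrict_apply_self _ _).symm
      _ ≤ volume.restrict S {a | ENNReal.ofReal (dens a) ≠ 0} := measure_mono hsub
      _ = 0 := h2
    exact le_antisymm hle zero_le
  -- distance facts
  have hdB : ∀ x ∈ B, hypDist n x < R := fun x hx =>
    (log_ratio_lt_iff (norm_nonneg x) (hB1 x hx)).2 (mem_ball_zero_iff.1 hx)
  have hdBc : ∀ x : EuclideanSpace ℝ (Fin n), ‖x‖ < 1 → x ∉ B → R ≤ hypDist n x := by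
    intro x hx1 hxB
    by_contra h
    push_neg at h
    exact hxB (mem_ball_zero_iff.2 ((log_ratio_lt_iff (norm_nonneg x) hx1).1 h))
  -- the monotone extension g
  set g := fun x : EuclideanSpace ℝ (Fin n) => v (max 0 (hypDist n x)) with hg
  have hvm : Monotone fun t : ℝ => v (max 0 t) := fun a b hab =>
    hv (mem_Ici.2 (le_max_left _ _)) (mem_Ici.2 (le_max_left _ _)) (max_le_max le_rfl hab)
  have hg_meas : Measurable g := hvm.measurable.comp (measurable_hypDist n)
  have hgeq : ∀ x : EuclideanSpace ℝ (Fin n), ‖x‖ < 1 → g x = v (hypDist n x) := by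
    intro x hx
    rw [hg]
    simp only
    rw [max_eq_right (hypDist_nonneg' hx)]
  have e1 : (∫ x in Ω, v (hypDist n x) ∂μ) = ∫ x in Ω, g x ∂μ :=
    (setIntegral_congr_fun hΩ_meas fun x hx => (hgeq x (hΩ1 x hx)).symm)
  have e2 : (∫ x in B, v (hypDist n x) ∂μ) = ∫ x in B, g x ∂μ :=
    (setIntegral_congr_fun hBmeas fun x hx => (hgeq x (hB1 x hx)).symm)
  -- bound on g
  set M := Real.log ((1+rm)/(1-rm)) with hM
  obtain ⟨C, hC⟩ := hb M
  have hgC : ∀ x : EuclideanSpace ℝ (Fin n), ‖x‖ ≤ rm → |g x| ≤ C := by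
    intro x hx
    have hx1 : ‖x‖ < 1 := lt_of_le_of_lt hx hrm_lt1
    rw [hgeq x hx1]
    exact hC _ ⟨hypDist_nonneg' hx1, hypDist_le hx hrm_lt1⟩
  -- integrability
  have hInt : ∀ S : Set (EuclideanSpace ℝ (Fin n)), MeasurableSet S →
      S ⊆ Metric.closedBall 0 rm → IntegrableOn g S μ := by
    intro S hS hSsub
    have hfin : μ S < ⊤ := lt_of_le_of_lt (measure_mono hSsub) hfinK
    have hconst : Integrable (fun _ : EuclideanSpace ℝ (Fin n) => C) (μ.restrict S) :=
      integrable_const_iff.2 (Or.inr ⟨by rwa [Measure.restrict_apply_univ]⟩)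
    refine Integrable.mono' hconst (hg_meas.aestronglyMeasurable.restrict) ?_
    refine (ae_restrict_iff' hS).2 (ae_of_all _ fun x hx => ?_)
    rw [Real.norm_eq_abs]
    exact hgC x (mem_closedBall_zero_iff.1 (hSsub hx))
  have hIntΩB : IntegrableOn g (Ω ∩ B) μ :=
    hInt _ (hΩ_meas.inter hBmeas) (inter_subset_left.trans hΩrm)
  have hIntΩmB : IntegrableOn g (Ω \ B) μ :=
    hInt _ (hΩ_meas.diff hBmeas) (diff_subset.trans hΩrm)
  have hIntBmΩ : IntegrableOn g (B \ Ω) μ :=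
    hInt _ (hBmeas.diff hΩ_meas) (diff_subset.trans hBrm)
  -- finite measures of pieces
  have hfinΩB : μ (Ω ∩ B) ≠ ⊤ :=
    (lt_of_le_of_lt (measure_mono (inter_subset_left.trans hΩrm)) hfinK).ne
  -- equal measures of the two differences
  have hμeq : μ (Ω \ B) = μ (B \ Ω) := by
    have h1 := measure_inter_add_diff (μ := μ) Ω hBmeas
    have h2 := measure_inter_add_diff (μ := μ) B hΩ_meas
    rw [inter_comm] at h2
    rw [← ENNReal.add_right_inj hfinΩB, h1, h2]
    exact hvol
  have hmeq : (μ (Ω \ B)).toReal = (μ (B \ Ω)).toReal := by rw [hμeq]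
  -- splits
  have hdisj1 : Disjoint (Ω ∩ B) (Ω \ B) := Set.disjoint_left.2 fun x hx hx2 => hx2.2 hx.2
  have hdisj2 : Disjoint (B ∩ Ω) (B \ Ω) := Set.disjoint_left.2 fun x hx hx2 => hx2.2 hx.2
  have hsplitΩ : ∫ x in Ω, g x ∂μ = (∫ x in Ω ∩ B, g x ∂μ) + ∫ x in Ω \ B, g x ∂μ := by
    rw [← setIntegral_union hdisj1 (hΩ_meas.diff hBmeas) hIntΩB hIntΩmB, inter_union_diff]
  have hsplitB : ∫ x in B, g x ∂μ = (∫ x in Ω ∩ B, g x ∂μ) + ∫ x in B \ Ω, g x ∂μ := by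
    rw [inter_comm Ω B, ← setIntegral_union hdisj2 (hBmeas.diff hΩ_meas)
      (by rwa [inter_comm] at hIntΩB) hIntBmΩ, inter_union_diff]
  set c := v R with hc
  have hRmem : (R : ℝ) ∈ Ici (0:ℝ) := hR.le
  -- lower bound on Ω \ B
  have hlow : (μ (Ω \ B)).toReal * c ≤ ∫ x in Ω \ B, g x ∂μ := by
    have hmono := setIntegral_mono_on (μ := μ) (s := Ω \ B) (f := fun _ => c) (g := g)
      (integrableOn_const (lt_of_le_of_lt (measure_mono (diff_subset.trans hΩrm)) hfinK).ne)
      hIntΩmB (hΩ_meas.diff hBmeas) ?_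
    · rwa [setIntegral_const, smul_eq_mul] at hmono
    · intro x hx
      have hx1 : ‖x‖ < 1 := hΩ1 x hx.1
      rw [hgeq x hx1]
      exact hv hRmem (hypDist_nonneg' hx1) (hdBc x hx1 hx.2)
  -- upper bound on B \ Ω
  have hup : ∫ x in B \ Ω, g x ∂μ ≤ (μ (B \ Ω)).toReal * c := by
    have hmono := setIntegral_mono_on (μ := μ) (s := B \ Ω) (f := g) (g := fun _ => c)
      hIntBmΩ
      (integrableOn_const (lt_of_le_of_lt (measure_mono (diff_subset.trans hBrm)) hfinK).ne)
      (hBmeas.diff hΩ_meas) ?_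
    · rwa [setIntegral_const, smul_eq_mul] at hmono
    · intro x hx
      have hx1 : ‖x‖ < 1 := hB1 x hx.1
      rw [hgeq x hx1]
      exact hv (hypDist_nonneg' hx1) hRmem (hdB x hx.1).le
  constructor
  · rw [e1, e2, hsplitΩ, hsplitB]
    rw [hmeq] at hlow
    linarith
  · intro hsv
    constructor
    · intro heq
      have heq' : ∫ x in Ω, g x ∂μ = ∫ x in B, g x ∂μ := by rw [← e1, ← e2]; exact heq
      have hdiffeq : ∫ x in Ω \ B, g x ∂μ = ∫ x in B \ Ω, g x ∂μ := by
        rw [hsplitΩ, hsplitB] at heq'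
        linarith
      have hBint : ∫ x in B \ Ω, g x ∂μ = (μ (B \ Ω)).toReal * c := by
        rw [← hdiffeq]
        rw [← hdiffeq] at hup
        rw [hmeq] at hlow
        linarith
      have hBconst : IntegrableOn (fun _ => c) (B \ Ω) μ :=
        integrableOn_const (lt_of_le_of_lt (measure_mono (diff_subset.trans hBrm)) hfinK).ne
      have key : ∫ x in B \ Ω, (c - g x) ∂μ = 0 := by
        rw [integral_sub hBconst hIntBmΩ, setIntegral_const, smul_eq_mul, hBint, measureReal_def, sub_self]
      have hBmΩ0 : μ (B \ Ω) = 0 := by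
        by_contra hne
        have hpos : 0 < μ (B \ Ω) := lt_of_le_of_ne zero_le (Ne.symm hne)
        have h0 : 0 ≤ᵐ[μ.restrict (B \ Ω)] fun x => c - g x := by
          refine (ae_restrict_iff' (hBmeas.diff hΩ_meas)).2 (ae_of_all _ fun x hx => ?_)
          have hx1 : ‖x‖ < 1 := hB1 x hx.1
          simp only [Pi.zero_apply]
          rw [hgeq x hx1]
          exact sub_nonneg.2 (hv (hypDist_nonneg' hx1) hRmem (hdB x hx.1).le)
        have hintsub : IntegrableOn (fun x => c - g x) (B \ Ω) μ := hBconst.sub hIntBmΩ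
        have hss : B \ Ω ⊆ Function.support fun x => c - g x := by
          intro x hx
          have hx1 : ‖x‖ < 1 := hB1 x hx.1
          have hlt : g x < c := by
            rw [hgeq x hx1]
            exact hsv (hypDist_nonneg' hx1) hRmem (hdB x hx.1)
          simp only [Function.mem_support]
          intro hcon
          rw [sub_eq_zero] at hcon
          exact absurd hcon.symm (ne_of_lt hlt)
        have := (setIntegral_pos_iff_support_of_nonneg_ae h0 hintsub).2
          (by rwa [inter_eq_self_of_subset_right hss])
        rw [key] at this
        exact lt_irrefl _ this
      have hΩmB0 : μ (Ω \ B) = 0 := by rw [hμeq]; exact hBmΩ0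
      have v1 : volume (Ω \ B) = 0 :=
        hnull _ (hΩ_meas.diff hBmeas) (fun x hx => hΩ1 x hx.1) hΩmB0
      have v2 : volume (B \ Ω) = 0 :=
        hnull _ (hBmeas.diff hΩ_meas) (fun x hx => hB1 x hx.1) hBmΩ0
      rw [Set.symmDiff_def]
      exact measure_union_null v1 v2
    · intro h0
      have hμ0 : μ (symmDiff Ω B) = 0 := by
        rw [hμdef]
        exact withDensity_absolutelyContinuous volume _ h0
      exact setIntegral_congr_set (measure_symmDiff_eq_zero_iff.1 hμ0)

/-- **Lemma 4.4 (hyperbolic case)**: if `Ω ⊆ 𝔹ⁿ` is a measurable set with compact closure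
contained in the Poincaré ball and with the same weighted volume as the geodesic ball
`B_R(o)`, then for every nondecreasing `v` (bounded on bounded sets)
`∫_Ω v(d(x)) dη_φ ≥ ∫_{B_R(o)} v(d(x)) dη_φ`, and for every nonincreasing `u` (bounded on
bounded sets) `∫_Ω u(d(x)) dη_φ ≤ ∫_{B_R(o)} u(d(x)) dη_φ`; moreover, for strictly
monotone `v` (resp. `u`), equality holds if and only if the symmetric difference of `Ω`
and `B_R(o)` is Lebesgue-null. -/
theorem hypWMeasure_radial_integral_comparison
    (n : ℕ) (hn : 2 ≤ n) (φ : ℝ → ℝ) (hφ : Continuous φ)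
    (Ω : Set (EuclideanSpace ℝ (Fin n)))
    (hΩ_meas : MeasurableSet Ω)
    (hΩ_cpt : IsCompact (closure Ω))
    (hΩ_sub : closure Ω ⊆ ball (0 : EuclideanSpace ℝ (Fin n)) 1)
    (R : ℝ) (hR : 0 < R)
    (hvol : hypWMeasure n φ Ω = hypWMeasure n φ (geoBall n R)) :
    (∀ v : ℝ → ℝ, MonotoneOn v (Ici 0) →
      (∀ M : ℝ, ∃ C : ℝ, ∀ t ∈ Icc (0 : ℝ) M, |v t| ≤ C) →
      (∫ x in Ω, v (hypDist n x) ∂(hypWMeasure n φ)) ≥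
        ∫ x in geoBall n R, v (hypDist n x) ∂(hypWMeasure n φ)) ∧
    (∀ u : ℝ → ℝ, AntitoneOn u (Ici 0) →
      (∀ M : ℝ, ∃ C : ℝ, ∀ t ∈ Icc (0 : ℝ) M, |u t| ≤ C) →
      (∫ x in Ω, u (hypDist n x) ∂(hypWMeasure n φ)) ≤
        ∫ x in geoBall n R, u (hypDist n x) ∂(hypWMeasure n φ)) ∧
    (∀ v : ℝ → ℝ, StrictMonoOn v (Ici 0) →
      (∀ M : ℝ, ∃ C : ℝ, ∀ t ∈ Icc (0 : ℝ) M, |v t| ≤ C) →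
      ((∫ x in Ω, v (hypDist n x) ∂(hypWMeasure n φ)) =
        (∫ x in geoBall n R, v (hypDist n x) ∂(hypWMeasure n φ)) ↔
        volume (symmDiff Ω (geoBall n R)) = 0)) ∧
    (∀ u : ℝ → ℝ, StrictAntiOn u (Ici 0) →
      (∀ M : ℝ, ∃ C : ℝ, ∀ t ∈ Icc (0 : ℝ) M, |u t| ≤ C) →
      ((∫ x in Ω, u (hypDist n x) ∂(hypWMeasure n φ)) =
        (∫ x in geoBall n R, u (hypDist n x) ∂(hypWMeasure n φ)) ↔
        volume (symmDiff Ω (geoBall n R)) = 0)) := by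
  have key := fun (v : ℝ → ℝ) hv hb =>
    hyp_key n φ hφ Ω hΩ_meas hΩ_cpt hΩ_sub R hR hvol v hv hb
  refine ⟨fun v hv hb => (key v hv hb).1, ?_, fun v hv hb => (key v hv.monotoneOn hb).2 hv, ?_⟩
  · intro u hu hb
    have hneg : MonotoneOn (fun t => -u t) (Ici 0) := fun a ha b hb' h => neg_le_neg (hu ha hb' h)
    have hb' : ∀ M : ℝ, ∃ C : ℝ, ∀ t ∈ Icc (0 : ℝ) M, |(fun t => -u t) t| ≤ C := fun M =>
      (hb M).imp fun C hC t ht => by simpa [abs_neg] using hC t ht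
    have h := (key _ hneg hb').1
    simp only [integral_neg] at h
    linarith
  · intro u hu hb
    have hneg : StrictMonoOn (fun t => -u t) (Ici 0) := fun a ha b hb' h => neg_lt_neg (hu ha hb' h)
    have hb' : ∀ M : ℝ, ∃ C : ℝ, ∀ t ∈ Icc (0 : ℝ) M, |(fun t => -u t) t| ≤ C := fun M =>
      (hb M).imp fun C hC t ht => by simpa [abs_neg] using hC t ht
    have h := (key _ hneg.monotoneOn hb').2 hneg
    simpa only [integral_neg, neg_inj] using h
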